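/- For every STL formula Φ over S, every trace π : ℕ → S, every time t : ℕ, and every formula ξ ∈ N(Φ): if (π,t) ⊨ ξ then (π,t) ⊨ Φ. That is, each member of N(Φ) describes a way in which Φ might be satisfied. -/
import Mathlib


/-- STL formulas over a type `S` of scenes. -/
inductive STL (S : Type) : Type 1 where
  | atom : (S → Prop) → STL S
  | neg : STL S → STL S
  | conj : STL S → STL S → STL S
  | disj : STL S → STL S → STL S
  | untl : ℕ → ℕ → STL S → STL S → STL S
  | always : ℕ → ℕ → STL S → STL S
  | eventually : ℕ → ℕ → STL S → STL S
  | next : STL S → STL S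

/-- Satisfaction `(π, t) ⊨ φ`. -/
def STL.Sat {S : Type} (π : ℕ → S) : ℕ → STL S → Prop
  | t, .atom p => p (π t)
  | t, .neg φ => ¬ STL.Sat π t φ
  | t, .conj φ ψ => STL.Sat π t φ ∧ STL.Sat π t ψ
  | t, .disj φ ψ => STL.Sat π t φ ∨ STL.Sat π t ψ
  | t, .untl a b φ ψ =>
      ∃ t', t + a ≤ t' ∧ t' ≤ t + b ∧ STL.Sat π t' ψ ∧
        ∀ t'', t ≤ t'' → t'' ≤ t' → STL.Sat π t'' φ
  | t, .always a b φ => ∀ t', t + a ≤ t' → t' ≤ t + b → STL.Sat π t' φ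
  | t, .eventually a b φ => ∃ t', t + a ≤ t' ∧ t' ≤ t + b ∧ STL.Sat π t' φ
  | t, .next φ => STL.Sat π (t + 1) φ

mutual
/-- `Theta Φ`: the set of formulas describing different ways of violating `Φ`.
(In the until case, `Θ(¬φ₁ ∨ φ₂)` and `Θ(φ₁ ∨ φ₂)` are unfolded via the
defining equations `Θ(¬φ₁ ∨ φ₂) = {x ∧ y : x ∈ N(φ₁), y ∈ Θ(φ₂)}` and
`Θ(φ₁ ∨ φ₂) = {x ∧ y : x ∈ Θ(φ₁), y ∈ Θ(φ₂)}`.) -/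
def STL.Theta {S : Type} : STL S → Set (STL S)
  | .atom p => {STL.neg (STL.atom p)}
  | .conj φ ψ => STL.Theta φ ∪ STL.Theta ψ
  | .disj φ ψ => {ξ | ∃ x ∈ STL.Theta φ, ∃ y ∈ STL.Theta ψ, ξ = STL.conj x y}
  | .neg φ => STL.NSat φ
  | .untl a b φ ψ =>
      {ξ | ∃ x ∈ {ζ | ∃ u ∈ STL.NSat φ, ∃ v ∈ STL.Theta ψ, ζ = STL.conj u v},
           ∃ y ∈ {ζ | ∃ u ∈ STL.Theta φ, ∃ v ∈ STL.Theta ψ, ζ = STL.conj u v},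
           ξ = STL.untl a b x y}
      ∪ {ξ | ∃ x ∈ STL.Theta φ, ∃ y ∈ STL.Theta ψ, ξ = STL.conj x y}
  | .always a b φ => {ξ | ∃ x ∈ STL.Theta φ, ξ = STL.eventually a b x}
  | .eventually a b φ => {ξ | ∃ x ∈ STL.Theta φ, ξ = STL.always a b x}
  | .next φ => {ξ | ∃ x ∈ STL.Theta φ, ξ = STL.next x}

/-- `NSat Φ` (written `N(Φ)` in the paper): the set of formulas describing
different ways of satisfying `Φ`. -/
def STL.NSat {S : Type} : STL S → Set (STL S)
  | .atom p => {STL.atom p}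
  | .conj φ ψ => {ξ | ∃ x ∈ STL.NSat φ, ∃ y ∈ STL.NSat ψ, ξ = STL.conj x y}
  | .disj φ ψ => STL.NSat φ ∪ STL.NSat ψ
  | .neg φ => STL.Theta φ
  | .untl a b φ ψ => {ξ | ∃ x ∈ STL.NSat φ, ∃ y ∈ STL.NSat ψ, ξ = STL.untl a b x y}
  | .always a b φ => {ξ | ∃ x ∈ STL.NSat φ, ξ = STL.always a b x}
  | .eventually a b φ => {ξ | ∃ x ∈ STL.NSat φ, ξ = STL.eventually a b x}
  | .next φ => {ξ | ∃ x ∈ STL.NSat φ, ξ = STL.next x}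
end


theorem stl_sound_both {S : Type} (Φ : STL S) :
    (∀ π t ξ, ξ ∈ STL.Theta Φ → STL.Sat π t ξ → ¬ STL.Sat π t Φ) ∧
    (∀ π t ξ, ξ ∈ STL.NSat Φ → STL.Sat π t ξ → STL.Sat π t Φ) := by
  induction Φ with
  | atom p =>
    constructor
    · rintro π t ξ hξ hs
      simp only [STL.Theta, Set.mem_singleton_iff] at hξ
      subst hξ; exact hs
    · rintro π t ξ hξ hs
      simp only [STL.NSat, Set.mem_singleton_iff] at hξ
      subst hξ; exact hs
  | neg φ ih =>
    exact ⟨fun π t ξ hξ hs hΦ => hΦ (ih.2 π t ξ hξ hs),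
           fun π t ξ hξ hs => ih.1 π t ξ hξ hs⟩
  | conj φ ψ ihφ ihψ =>
    constructor
    · rintro π t ξ hξ hs ⟨h1, h2⟩
      rcases hξ with hξ | hξ
      · exact ihφ.1 π t ξ hξ hs h1
      · exact ihψ.1 π t ξ hξ hs h2
    · rintro π t ξ ⟨x, hx, y, hy, rfl⟩ ⟨hsx, hsy⟩
      exact ⟨ihφ.2 π t x hx hsx, ihψ.2 π t y hy hsy⟩
  | disj φ ψ ihφ ihψ =>
    constructor
    · rintro π t ξ ⟨x, hx, y, hy, rfl⟩ ⟨hsx, hsy⟩ h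
      rcases h with h | h
      · exact ihφ.1 π t x hx hsx h
      · exact ihψ.1 π t y hy hsy h
    · rintro π t ξ hξ hs
      rcases hξ with hξ | hξ
      · exact Or.inl (ihφ.2 π t ξ hξ hs)
      · exact Or.inr (ihψ.2 π t ξ hξ hs)
  | untl a b φ ψ ihφ ihψ =>
    constructor
    · rintro π t ξ hξ hs h
      rcases hξ with ⟨x, ⟨u, hu, v, hv, rfl⟩, y, ⟨u', hu', v', hv', rfl⟩, rfl⟩ |
        ⟨x, hx, y, hy, rfl⟩
      · obtain ⟨s, hs1, hs2, ⟨hyu', hyv'⟩, hall⟩ := hs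
        obtain ⟨hxu, _⟩ := hall s (le_trans (Nat.le_add_right t a) hs1) le_rfl
        exact ihφ.1 π s u' hu' hyu' (ihφ.2 π s u hu hxu)
      · obtain ⟨s, hs1, hs2, hψs, hall⟩ := h
        obtain ⟨hsx, hsy⟩ := hs
        rcases Nat.lt_or_ge t s with hts | hts
        · exact ihφ.1 π t x hx hsx
            (hall t le_rfl (le_of_lt hts))
        · have : s = t := le_antisymm hts (le_trans (Nat.le_add_right t a) hs1)
          subst this
          exact ihψ.1 π s y hy hsy hψs
    · rintro π t ξ ⟨x, hx, y, hy, rfl⟩ ⟨s, hs1, hs2, hsy, hall⟩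
      exact ⟨s, hs1, hs2, ihψ.2 π s y hy hsy,
        fun r hr1 hr2 => ihφ.2 π r x hx (hall r hr1 hr2)⟩
  | always a b φ ih =>
    constructor
    · rintro π t ξ ⟨x, hx, rfl⟩ ⟨s, hs1, hs2, hsx⟩ h
      exact ih.1 π s x hx hsx (h s hs1 hs2)
    · rintro π t ξ ⟨x, hx, rfl⟩ hs s hs1 hs2
      exact ih.2 π s x hx (hs s hs1 hs2)
  | eventually a b φ ih =>
    constructor
    · rintro π t ξ ⟨x, hx, rfl⟩ hs ⟨s, hs1, hs2, hφs⟩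
      exact ih.1 π s x hx (hs s hs1 hs2) hφs
    · rintro π t ξ ⟨x, hx, rfl⟩ ⟨s, hs1, hs2, hsx⟩
      exact ⟨s, hs1, hs2, ih.2 π s x hx hsx⟩
  | next φ ih =>
    constructor
    · rintro π t ξ ⟨x, hx, rfl⟩ hs h
      exact ih.1 π (t+1) x hx hs h
    · rintro π t ξ ⟨x, hx, rfl⟩ hs
      exact ih.2 π (t+1) x hx hs

/-- Every trace (at any time) satisfying a member of `N(Φ)` satisfies `Φ`. -/
theorem nsat_sound {S : Type} (Φ : STL S) (π : ℕ → S) (t : ℕ) (ξ : STL S)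
    (hξ : ξ ∈ STL.NSat Φ) (hsat : STL.Sat π t ξ) : STL.Sat π t Φ :=
  (stl_sound_both Φ).2 π t ξ hξ hsat
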